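/- Let w : μ ↦ μ' be a finite-variance evolutionary process with fitness W. Define the purely selective process w_NS : μ ↦ Wμ by (w_NS)_i := W(ĩ)·δ_i (Dirac mass weighted by fitness) and the purely environmental process w_EC : Wμ ↦ μ' by (w_EC)_ĩ := w_ĩ/W(ĩ) on {W > 0}. Then w = w_EC ∘ w_NS as transition kernels, w_NS has the same fitness function W as w, and w_EC has constant fitness 1 (i.e., (w_EC)_ĩ(I') = 1 for all ĩ with W(ĩ) > 0). -/

import Mathlib

open MeasureTheory Real Set

/-- Price Representation Theorem: every evolutionary process `w : μ ↦ μ'` factors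
as a purely environmental process after a purely selective one:
`w = w_EC ∘ w_NS`, where `(w_NS)_i = W(i)·δ_i` and `(w_EC)_ĩ = w_ĩ / W(ĩ)`.
Moreover `w_NS` has the same fitness as `w`, and `w_EC` has constant fitness `1`
on `{W > 0}`. -/
theorem price_representation
    {I I' : Type*} [MeasurableSpace I] [MeasurableSpace I']
    (μ : Measure I) (μ' : Measure I') [IsFiniteMeasure μ] [IsFiniteMeasure μ']
    (w : I → Measure I') (hwfin : ∀ i, IsFiniteMeasure (w i))
    (hwm : ∀ B : Set I', MeasurableSet B → Measurable fun i => w i B)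
    (hdis : ∀ B : Set I', MeasurableSet B → μ' B = ∫⁻ i, w i B ∂μ) :
    let wNS : I → Measure I := fun i => (w i univ) • Measure.dirac i
    let wEC : I → Measure I' := fun j => (w j univ)⁻¹ • w j
    (∀ i, ∀ C : Set I', MeasurableSet C →
        (∫⁻ j, wEC j C ∂(wNS i)) = w i C) ∧
      (∀ i, wNS i univ = w i univ) ∧
      (∀ i, w i univ ≠ 0 → wEC i univ = 1) := by
  intro wNS wEC
  refine ⟨?_, ?_, ?_⟩
  · intro i C hC
    have hmeas : Measurable fun j => wEC j C := by
      simpa [wEC, Measure.smul_apply, smul_eq_mul, Pi.mul_def, Pi.inv_def] using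
        ((hwm univ MeasurableSet.univ).inv.mul (hwm C hC))
    have htop : w i univ ≠ ⊤ := @measure_ne_top _ _ _ (hwfin i) univ
    have hle : w i C ≤ w i univ := measure_mono (subset_univ C)
    calc (∫⁻ j, wEC j C ∂(wNS i))
        = w i univ * wEC i C := by
          simp [wNS, lintegral_smul_measure, lintegral_dirac' _ hmeas]
      _ = w i univ * ((w i univ)⁻¹ * w i C) := by
          simp [wEC, Measure.smul_apply, smul_eq_mul]
      _ = w i C := by
          rcases eq_or_ne (w i univ) 0 with h0 | h0
          · have : w i C = 0 := le_antisymm (h0 ▸ hle) zero_le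
            simp [h0, this]
          · rw [← mul_assoc, ENNReal.mul_inv_cancel h0 htop, one_mul]
  · intro i
    simp [wNS, Measure.smul_apply]
  · intro i h0
    have htop : w i univ ≠ ⊤ := @measure_ne_top _ _ _ (hwfin i) univ
    simp [wEC, Measure.smul_apply, smul_eq_mul, ENNReal.inv_mul_cancel h0 htop]
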